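/- arXiv:2203.04794 — 6 statements merged into one kernel-verified Lean document; each statement's English description precedes it below -/
import Mathlib

section
/- Let ρ₁, ρ₂ : (a,b) → ℝ be differentiable functions satisfying ρ₁' + ρ₁² ≤ ρ₂' + ρ₂² on (a,b). If ρ₁(t₀) ≥ ρ₂(t₀) for some t₀ ∈ (a,b), then ρ₁(t) ≥ ρ₂(t) for all t ∈ (a, t₀]. -/
/-- Comparison lemma for Riccati differential inequalities. -/
theorem riccati_comparison (a b t₀ : ℝ) (ρ₁ ρ₂ ρ₁' ρ₂' : ℝ → ℝ)
    (hρ₁ : ∀ t ∈ Set.Ioo a b, HasDerivAt ρ₁ (ρ₁' t) t)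
    (hρ₂ : ∀ t ∈ Set.Ioo a b, HasDerivAt ρ₂ (ρ₂' t) t)
    (hineq : ∀ t ∈ Set.Ioo a b, ρ₁' t + (ρ₁ t) ^ 2 ≤ ρ₂' t + (ρ₂ t) ^ 2)
    (ht₀ : t₀ ∈ Set.Ioo a b) (h₀ : ρ₂ t₀ ≤ ρ₁ t₀) :
    ∀ t ∈ Set.Ioc a t₀, ρ₂ t ≤ ρ₁ t := by
  intro t ht
  have htIoo : t ∈ Set.Ioo a b := ⟨ht.1, lt_of_le_of_lt ht.2 ht₀.2⟩
  set c : ℝ → ℝ := fun s => ρ₁ s + ρ₂ s with hc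
  have hcont : ContinuousOn c (Set.Ioo a b) := fun s hs =>
    (((hρ₁ s hs).continuousAt.add (hρ₂ s hs).continuousAt)).continuousWithinAt
  set F : ℝ → ℝ := fun s => ∫ x in t₀..s, c x with hF
  have hFd : ∀ s ∈ Set.Ioo a b, HasDerivAt F (c s) s := by
    intro s hs
    have hsub : Set.uIcc t₀ s ⊆ Set.Ioo a b :=
      Set.ordConnected_Ioo.uIcc_subset ht₀ hs
    have hint : IntervalIntegrable c MeasureTheory.volume t₀ s :=
      (hcont.mono hsub).intervalIntegrable
    have hca : ContinuousAt c s :=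
      ((hρ₁ s hs).continuousAt.add (hρ₂ s hs).continuousAt)
    exact intervalIntegral.integral_hasDerivAt_right hint
      (hcont.stronglyMeasurableAtFilter isOpen_Ioo s hs) hca
  set z : ℝ → ℝ := fun s => (ρ₁ s - ρ₂ s) * Real.exp (F s) with hz
  have hzd : ∀ s ∈ Set.Ioo a b, HasDerivAt z
      ((ρ₁' s - ρ₂' s) * Real.exp (F s) + (ρ₁ s - ρ₂ s) * (Real.exp (F s) * c s)) s := by
    intro s hs
    exact ((hρ₁ s hs).sub (hρ₂ s hs)).mul ((hFd s hs).exp)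
  have hzcont : ContinuousOn z (Set.Ioo a b) := fun s hs =>
    (hzd s hs).continuousAt.continuousWithinAt
  have hzdiff : DifferentiableOn ℝ z (interior (Set.Ioo a b)) := by
    rw [interior_Ioo]
    exact fun s hs => ((hzd s hs).differentiableAt).differentiableWithinAt
  have hanti : AntitoneOn z (Set.Ioo a b) := by
    apply antitoneOn_of_deriv_nonpos (convex_Ioo a b) hzcont hzdiff
    rw [interior_Ioo]
    intro s hs
    rw [(hzd s hs).deriv]
    have h1 := hineq s hs
    have h2 : (0:ℝ) < Real.exp (F s) := Real.exp_pos _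
    simp only [hc]
    nlinarith [h2]
  have hmono := hanti htIoo ht₀ ht.2
  have hFt₀ : F t₀ = 0 := intervalIntegral.integral_same
  have hzt₀ : 0 ≤ z t₀ := by
    simp only [hz, hFt₀, Real.exp_zero, mul_one]
    linarith
  have hzt : 0 ≤ z t := le_trans hzt₀ hmono
  have h2 : (0:ℝ) < Real.exp (F t) := Real.exp_pos _
  simp only [hz] at hzt
  nlinarith
end

section
/- Fix κ ∈ ℝ and let f, g : [0,r] → ℝ≥0 be twice differentiable functions such that f'' + κf ≤ g'' + κg on [0,r], f(0) = g(0), and f'(0) ≤ g'(0). Then f ≤ g on [0, min(r, π_κ)], where π_κ = π/√κ if κ > 0 and π_κ = ∞ if κ ≤ 0. -/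
open Set Filter Topology

/-- Core positivity lemma when `s T > 0`. -/
lemma jacobi_core_pos (κ T : ℝ) (hT : 0 < T)
    (h h' h'' s s' : ℝ → ℝ)
    (hh1 : ∀ t ∈ Icc 0 T, HasDerivAt h (h' t) t)
    (hh2 : ∀ t ∈ Icc 0 T, HasDerivAt h' (h'' t) t)
    (hode : ∀ t ∈ Icc 0 T, 0 ≤ h'' t + κ * h t)
    (hh0 : h 0 = 0) (hh0' : 0 ≤ h' 0)
    (hs1 : ∀ t, HasDerivAt s (s' t) t)
    (hs2 : ∀ t, HasDerivAt s' (-κ * s t) t)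
    (hs0 : s 0 = 0) (hs0' : 0 < s' 0)
    (hspos : ∀ u, 0 < u → u < T → 0 < s u)
    (hsT : 0 < s T) :
    0 ≤ h T := by
  set w : ℝ → ℝ := fun u => h' u * s u - h u * s' u with hw
  have hsnn : ∀ u ∈ Icc (0:ℝ) T, 0 ≤ s u := by
    intro u hu
    rcases eq_or_lt_of_le hu.1 with h0 | h0
    · rw [← h0, hs0]
    rcases eq_or_lt_of_le hu.2 with h1 | h1
    · rw [h1]; exact hsT.le
    · exact (hspos u h0 h1).le
  have hwd : ∀ u ∈ Icc (0:ℝ) T, HasDerivAt w ((h'' u + κ * h u) * s u) u := by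
    intro u hu
    have := ((hh2 u hu).mul (hs1 u)).sub ((hh1 u hu).mul (hs2 u))
    exact this.congr_deriv (by ring)
  have hwmono : MonotoneOn w (Icc 0 T) := by
    apply monotoneOn_of_deriv_nonneg (convex_Icc 0 T)
      (fun u hu => ((hwd u hu).continuousAt).continuousWithinAt)
    · intro x hx
      rw [interior_Icc] at hx
      exact (hwd x ⟨hx.1.le, hx.2.le⟩).differentiableAt.differentiableWithinAt
    · intro x hx
      rw [interior_Icc] at hx
      rw [(hwd x ⟨hx.1.le, hx.2.le⟩).deriv]
      exact mul_nonneg (hode x ⟨hx.1.le, hx.2.le⟩) (hsnn x ⟨hx.1.le, hx.2.le⟩)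
  have hw0 : w 0 = 0 := by simp [hw, hh0, hs0]
  have hwnn : ∀ u ∈ Icc (0:ℝ) T, 0 ≤ w u := by
    intro u hu
    have := hwmono (left_mem_Icc.mpr hT.le) hu hu.1
    rwa [hw0] at this
  have key : ∀ a ∈ Ioo (0:ℝ) T, h a * s T ≤ h T * s a := by
    intro a ha
    have hsub : Icc a T ⊆ Icc 0 T := Icc_subset_Icc ha.1.le le_rfl
    have hspos' : ∀ u ∈ Icc a T, 0 < s u := by
      intro u hu
      rcases eq_or_lt_of_le hu.2 with h1 | h1
      · rw [h1]; exact hsT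
      · exact hspos u (lt_of_lt_of_le ha.1 hu.1) h1
    have hvd : ∀ u ∈ Icc a T, HasDerivAt (fun x => h x / s x) (w u / (s u)^2) u := by
      intro u hu
      exact (hh1 u (hsub hu)).div (hs1 u) (hspos' u hu).ne'
    have hvmono : MonotoneOn (fun x => h x / s x) (Icc a T) := by
      apply monotoneOn_of_deriv_nonneg (convex_Icc a T)
        (fun u hu => (hvd u hu).continuousAt.continuousWithinAt)
      · intro x hx
        rw [interior_Icc] at hx
        exact (hvd x ⟨hx.1.le, hx.2.le⟩).differentiableAt.differentiableWithinAt
      · intro x hx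
        rw [interior_Icc] at hx
        rw [(hvd x ⟨hx.1.le, hx.2.le⟩).deriv]
        exact div_nonneg (hwnn x (hsub ⟨hx.1.le, hx.2.le⟩)) (sq_nonneg _)
    have h2 := hvmono (left_mem_Icc.mpr ha.2.le) (right_mem_Icc.mpr ha.2.le) ha.2.le
    rwa [div_le_div_iff₀ (hspos' a (left_mem_Icc.mpr ha.2.le)) hsT] at h2
  -- limit as a → 0+
  have hne : ∀ x ∈ Ioi (0:ℝ), x ∈ ({0}ᶜ : Set ℝ) := fun x hx => ne_of_gt hx
  have hslope_h : Tendsto (fun a => h a / a) (𝓝[>] (0:ℝ)) (𝓝 (h' 0)) := by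
    have := (hasDerivAt_iff_tendsto_slope.mp (hh1 0 (left_mem_Icc.mpr hT.le))).mono_left
      (nhdsWithin_mono 0 hne)
    refine this.congr' ?_
    filter_upwards [self_mem_nhdsWithin] with a ha
    simp [slope_def_field, hh0]
  have hslope_s : Tendsto (fun a => s a / a) (𝓝[>] (0:ℝ)) (𝓝 (s' 0)) := by
    have := (hasDerivAt_iff_tendsto_slope.mp (hs1 0)).mono_left (nhdsWithin_mono 0 hne)
    refine this.congr' ?_
    filter_upwards [self_mem_nhdsWithin] with a ha
    simp [slope_def_field, hs0]
  have hlim : Tendsto (fun a => h T * (s a / a) - (h a / a) * s T) (𝓝[>] (0:ℝ))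
      (𝓝 (h T * s' 0 - h' 0 * s T)) :=
    (tendsto_const_nhds.mul hslope_s).sub (hslope_h.mul tendsto_const_nhds)
  have hge : 0 ≤ h T * s' 0 - h' 0 * s T := by
    refine ge_of_tendsto hlim ?_
    filter_upwards [Ioo_mem_nhdsGT_of_mem (by constructor <;> [rfl; exact hT] :
        (0:ℝ) ∈ Ico (0:ℝ) T)] with a ha
    have hk := key a ha
    have hpos : (0:ℝ) < a := ha.1
    have h3 : (h a * s T) / a ≤ (h T * s a) / a :=
      div_le_div_of_nonneg_right hk hpos.le
    have e1 : h T * (s a / a) = h T * s a / a := by ring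
    have e2 : h a / a * s T = h a * s T / a := by ring
    linarith
  nlinarith [mul_nonneg hh0' hsT.le, hs0', hge]

/-- Core lemma allowing `s T = 0` (endpoint of the sine function). -/
lemma jacobi_core (κ T : ℝ) (hT : 0 < T)
    (h h' h'' s s' : ℝ → ℝ)
    (hh1 : ∀ t ∈ Icc 0 T, HasDerivAt h (h' t) t)
    (hh2 : ∀ t ∈ Icc 0 T, HasDerivAt h' (h'' t) t)
    (hode : ∀ t ∈ Icc 0 T, 0 ≤ h'' t + κ * h t)
    (hh0 : h 0 = 0) (hh0' : 0 ≤ h' 0)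
    (hs1 : ∀ t, HasDerivAt s (s' t) t)
    (hs2 : ∀ t, HasDerivAt s' (-κ * s t) t)
    (hs0 : s 0 = 0) (hs0' : 0 < s' 0)
    (hspos : ∀ u, 0 < u → u < T → 0 < s u)
    (hsT : 0 ≤ s T) :
    0 ≤ h T := by
  rcases hsT.eq_or_lt with heq | hlt
  · -- s T = 0 : take a left limit
    have hcont : Tendsto h (𝓝[<] T) (𝓝 (h T)) :=
      ((hh1 T (right_mem_Icc.mpr hT.le)).continuousAt.tendsto).mono_left nhdsWithin_le_nhds
    refine ge_of_tendsto hcont ?_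
    filter_upwards [Ioo_mem_nhdsLT_of_mem (by constructor <;> [exact hT; rfl] :
        T ∈ Ioc (0:ℝ) T)] with b hb
    exact jacobi_core_pos κ b hb.1 h h' h'' s s'
      (fun u hu => hh1 u (Icc_subset_Icc le_rfl hb.2.le hu))
      (fun u hu => hh2 u (Icc_subset_Icc le_rfl hb.2.le hu))
      (fun u hu => hode u (Icc_subset_Icc le_rfl hb.2.le hu))
      hh0 hh0' hs1 hs2 hs0 hs0'
      (fun u hu hu2 => hspos u hu (hu2.trans hb.2))
      (hspos b hb.1 hb.2)
  · exact jacobi_core_pos κ T hT h h' h'' s s' hh1 hh2 hode hh0 hh0' hs1 hs2 hs0 hs0'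
      hspos hlt

/-- Jacobi comparison lemma: if `f'' + κ f ≤ g'' + κ g` on `[0, r]`, with
`f, g ≥ 0`, `f 0 = g 0` and `f' 0 ≤ g' 0`, then `f ≤ g` on `[0, min r π_κ]`,
where `π_κ = π / √κ` when `κ > 0` and `π_κ = ∞` otherwise. -/
theorem jacobi_comparison (κ r : ℝ) (hr : 0 < r)
    (f g f' g' f'' g'' : ℝ → ℝ)
    (hf0 : ∀ t ∈ Set.Icc 0 r, 0 ≤ f t) (hg0 : ∀ t ∈ Set.Icc 0 r, 0 ≤ g t)
    (hf1 : ∀ t ∈ Set.Icc 0 r, HasDerivAt f (f' t) t)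
    (hf2 : ∀ t ∈ Set.Icc 0 r, HasDerivAt f' (f'' t) t)
    (hg1 : ∀ t ∈ Set.Icc 0 r, HasDerivAt g (g' t) t)
    (hg2 : ∀ t ∈ Set.Icc 0 r, HasDerivAt g' (g'' t) t)
    (hineq : ∀ t ∈ Set.Icc 0 r, f'' t + κ * f t ≤ g'' t + κ * g t)
    (h0 : f 0 = g 0) (h0' : f' 0 ≤ g' 0) :
    ∀ t ∈ Set.Icc 0 r, (0 < κ → t ≤ Real.pi / Real.sqrt κ) → f t ≤ g t := by
  intro t ht hπ
  rcases eq_or_lt_of_le ht.1 with h0t | h0t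
  · rw [← h0t]; exact h0.le
  have hsub : Icc (0:ℝ) t ⊆ Icc 0 r := Icc_subset_Icc le_rfl ht.2
  have H : ∀ s s' : ℝ → ℝ, (∀ u, HasDerivAt s (s' u) u) →
      (∀ u, HasDerivAt s' (-κ * s u) u) → s 0 = 0 → 0 < s' 0 →
      (∀ u, 0 < u → u < t → 0 < s u) → 0 ≤ s t → f t ≤ g t := by
    intro s s' hs1 hs2 hs0 hs0' hspos hst
    have := jacobi_core κ t h0t (fun u => g u - f u) (fun u => g' u - f' u)
      (fun u => g'' u - f'' u) s s'
      (fun u hu => (hg1 u (hsub hu)).sub (hf1 u (hsub hu)))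
      (fun u hu => (hg2 u (hsub hu)).sub (hf2 u (hsub hu)))
      (fun u hu => by have := hineq u (hsub hu); linarith)
      (by simp [h0]) (by linarith) hs1 hs2 hs0 hs0' hspos hst
    simpa [sub_nonneg] using this
  rcases lt_trichotomy κ 0 with hκ | hκ | hκ
  · -- κ < 0 : s = sinh (√(-κ) u)
    set c := Real.sqrt (-κ) with hcdef
    have hc : 0 < c := Real.sqrt_pos.mpr (by linarith)
    have hc2 : c ^ 2 = -κ := Real.sq_sqrt (by linarith)
    have hcu : ∀ u : ℝ, HasDerivAt (fun x => c * x) c u := by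
      intro u
      simpa using (hasDerivAt_id u).const_mul c
    apply H (fun u => Real.sinh (c * u)) (fun u => c * Real.cosh (c * u))
    · intro u
      have := (hcu u).sinh
      convert this using 1
      ring
    · intro u
      have := ((hcu u).cosh).const_mul c
      exact this.congr_deriv (by rw [← hc2]; ring)
    · simp
    · simpa using hc
    · intro u hu _
      exact Real.sinh_pos_iff.mpr (mul_pos hc hu)
    · exact (Real.sinh_pos_iff.mpr (mul_pos hc h0t)).le
  · -- κ = 0 : s = id
    apply H (fun u => u) (fun _ => 1)
    · intro u; exact hasDerivAt_id u
    · intro u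
      rw [hκ]
      simpa using hasDerivAt_const u (1:ℝ)
    · rfl
    · norm_num
    · intro u hu _; exact hu
    · exact h0t.le
  · -- κ > 0 : s = sin (√κ u)
    set c := Real.sqrt κ with hcdef
    have hc : 0 < c := Real.sqrt_pos.mpr hκ
    have hc2 : c ^ 2 = κ := Real.sq_sqrt hκ.le
    have hct : c * t ≤ Real.pi := by
      have := hπ hκ
      calc c * t ≤ c * (Real.pi / c) := by
            exact mul_le_mul_of_nonneg_left this hc.le
        _ = Real.pi := by field_simp
    have hcu : ∀ u : ℝ, HasDerivAt (fun x => c * x) c u := by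
      intro u
      simpa using (hasDerivAt_id u).const_mul c
    apply H (fun u => Real.sin (c * u)) (fun u => c * Real.cos (c * u))
    · intro u
      have := (hcu u).sin
      convert this using 1
      ring
    · intro u
      have := ((hcu u).cos).const_mul c
      exact this.congr_deriv (by rw [← hc2]; ring)
    · simp
    · simpa using hc
    · intro u hu hu2
      apply Real.sin_pos_of_pos_of_lt_pi (mul_pos hc hu)
      calc c * u < c * t := by exact mul_lt_mul_of_pos_left hu2 hc
        _ ≤ Real.pi := hct
    · exact Real.sin_nonneg_of_nonneg_of_le_pi (mul_pos hc h0t).le hct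
end

section
/- Let ρ : (0,b) → ℝ be differentiable with ρ' + ρ² ≤ -κ for a fixed κ ∈ ℝ. Then ρ(t) ≤ ct_κ(t) for all t ∈ (0,b), and moreover b ≤ π_κ. -/
/-- The generalised sine function `sn_κ`: the solution of `x'' + κ x = 0`,
`x 0 = 0`, `x' 0 = 1`. -/
noncomputable def snK (κ t : ℝ) : ℝ :=
  if 0 < κ then Real.sin (Real.sqrt κ * t) / Real.sqrt κ
  else if κ = 0 then t
  else Real.sinh (Real.sqrt (-κ) * t) / Real.sqrt (-κ)

/-- The derivative `sn_κ'` of the generalised sine function. -/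
noncomputable def snK' (κ t : ℝ) : ℝ :=
  if 0 < κ then Real.cos (Real.sqrt κ * t)
  else if κ = 0 then 1
  else Real.cosh (Real.sqrt (-κ) * t)

/-- The generalised cotangent `ct_κ = sn_κ' / sn_κ`. -/
noncomputable def ctK (κ t : ℝ) : ℝ := snK' κ t / snK κ t

lemma snK_hasDeriv (κ t : ℝ) : HasDerivAt (snK κ) (snK' κ t) t := by
  unfold snK snK'
  rcases lt_trichotomy 0 κ with h | h | h
  · simp only [if_pos h]
    have hs : (0:ℝ) < Real.sqrt κ := Real.sqrt_pos.2 h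
    have := ((Real.hasDerivAt_sin (Real.sqrt κ * t)).comp t
      ((hasDerivAt_id t).const_mul (Real.sqrt κ))).div_const (Real.sqrt κ)
    refine this.congr_deriv ?_
    field_simp
  · simp only [if_neg (not_lt.2 h.ge), if_pos h.symm]
    exact hasDerivAt_id t
  · have h1 : ¬ (0 < κ) := by linarith
    have h2 : κ ≠ 0 := by linarith
    simp only [if_neg h1, if_neg h2]
    have hs : (0:ℝ) < Real.sqrt (-κ) := Real.sqrt_pos.2 (by linarith)
    have := ((Real.hasDerivAt_sinh (Real.sqrt (-κ) * t)).comp t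
      ((hasDerivAt_id t).const_mul (Real.sqrt (-κ)))).div_const (Real.sqrt (-κ))
    refine this.congr_deriv ?_
    field_simp

lemma snK'_hasDeriv (κ t : ℝ) : HasDerivAt (snK' κ) (-(κ * snK κ t)) t := by
  unfold snK snK'
  rcases lt_trichotomy 0 κ with h | h | h
  · simp only [if_pos h]
    have hs : (0:ℝ) < Real.sqrt κ := Real.sqrt_pos.2 h
    have hκ : Real.sqrt κ * Real.sqrt κ = κ := Real.mul_self_sqrt h.le
    have := (Real.hasDerivAt_cos (Real.sqrt κ * t)).comp t
      ((hasDerivAt_id t).const_mul (Real.sqrt κ))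
    refine this.congr_deriv ?_
    field_simp
    linear_combination (- Real.sin (Real.sqrt κ * t)) * hκ
  · simp only [if_neg (not_lt.2 h.ge), if_pos h.symm]
    simpa [← h] using hasDerivAt_const t (1:ℝ)
  · have h1 : ¬ (0 < κ) := by linarith
    have h2 : κ ≠ 0 := by linarith
    simp only [if_neg h1, if_neg h2]
    have hs : (0:ℝ) < Real.sqrt (-κ) := Real.sqrt_pos.2 (by linarith)
    have hκ : Real.sqrt (-κ) * Real.sqrt (-κ) = -κ := Real.mul_self_sqrt (by linarith)
    have := (Real.hasDerivAt_cosh (Real.sqrt (-κ) * t)).comp t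
      ((hasDerivAt_id t).const_mul (Real.sqrt (-κ)))
    refine this.congr_deriv ?_
    field_simp
    linear_combination (Real.sinh (Real.sqrt (-κ) * t)) * hκ

lemma snK_zero (κ : ℝ) : snK κ 0 = 0 := by
  unfold snK; split_ifs <;> simp

lemma snK'_zero (κ : ℝ) : snK' κ 0 = 1 := by
  unfold snK'; split_ifs <;> simp

lemma snK_pos {κ t : ℝ} (ht : 0 < t) (hκ : 0 < κ → t < Real.pi / Real.sqrt κ) :
    0 < snK κ t := by
  unfold snK
  rcases lt_trichotomy 0 κ with h | h | h
  · have hs : (0:ℝ) < Real.sqrt κ := Real.sqrt_pos.2 h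
    rw [if_pos h]
    apply div_pos _ hs
    apply Real.sin_pos_of_pos_of_lt_pi (by positivity)
    have := hκ h
    calc Real.sqrt κ * t < Real.sqrt κ * (Real.pi / Real.sqrt κ) := by
          exact (mul_lt_mul_iff_right₀ hs).2 this
      _ = Real.pi := by field_simp
  · rw [if_neg (not_lt.2 h.ge), if_pos h.symm]; exact ht
  · rw [if_neg (by linarith : ¬ (0:ℝ) < κ), if_neg (by linarith : κ ≠ 0)]
    have hs : (0:ℝ) < Real.sqrt (-κ) := Real.sqrt_pos.2 (by linarith)
    exact div_pos (Real.sinh_pos_iff.2 (by positivity)) hs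

lemma ctK_hasDeriv {κ t : ℝ} (h : snK κ t ≠ 0) :
    HasDerivAt (ctK κ) (-(ctK κ t)^2 - κ) t := by
  have := (snK'_hasDeriv κ t).div (snK_hasDeriv κ t) h
  refine this.congr_deriv ?_
  unfold ctK
  field_simp
  ring

lemma snK'_eq {κ t : ℝ} (h : snK κ t ≠ 0) : snK' κ t = ctK κ t * snK κ t := by
  unfold ctK; field_simp

lemma ctK_top (κ : ℝ) :
    Filter.Tendsto (ctK κ) (nhdsWithin 0 (Set.Ioi 0)) Filter.atTop := by
  have hpos : ∀ᶠ t in nhdsWithin (0:ℝ) (Set.Ioi 0), 0 < snK κ t := by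
    rcases lt_or_ge 0 κ with h | h
    · have hT : (0:ℝ) < Real.pi / Real.sqrt κ := by positivity
      filter_upwards [Ioo_mem_nhdsGT_of_mem (Set.left_mem_Ico.2 hT)] with t ht
      exact snK_pos ht.1 fun _ => ht.2
    · filter_upwards [self_mem_nhdsWithin] with t ht
      exact snK_pos ht fun hk => absurd hk (not_lt.2 h)
  have hsn : Filter.Tendsto (snK κ) (nhdsWithin 0 (Set.Ioi 0)) (nhdsWithin 0 (Set.Ioi 0)) := by
    rw [tendsto_nhdsWithin_iff]
    constructor
    · have := (snK_hasDeriv κ 0).continuousAt.tendsto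
      rw [snK_zero] at this
      exact this.mono_left nhdsWithin_le_nhds
    · exact hpos
  have hinv : Filter.Tendsto (fun t => (snK κ t)⁻¹) (nhdsWithin 0 (Set.Ioi 0)) Filter.atTop :=
    Filter.Tendsto.inv_tendsto_nhdsGT_zero hsn
  have hsn' : Filter.Tendsto (snK' κ) (nhdsWithin 0 (Set.Ioi 0)) (nhds 1) := by
    have := (snK'_hasDeriv κ 0).continuousAt.tendsto
    rw [snK'_zero] at this
    exact this.mono_left nhdsWithin_le_nhds
  have := hsn'.pos_mul_atTop one_pos hinv
  exact this.congr' (Filter.Eventually.of_forall fun t => by simp only [ctK, div_eq_mul_inv])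

lemma ctK_bot {κ : ℝ} (hκ : 0 < κ) :
    Filter.Tendsto (ctK κ) (nhdsWithin (Real.pi / Real.sqrt κ) (Set.Iio (Real.pi / Real.sqrt κ)))
      Filter.atBot := by
  set T := Real.pi / Real.sqrt κ with hT
  have hs : (0:ℝ) < Real.sqrt κ := Real.sqrt_pos.2 hκ
  have hT0 : 0 < T := by positivity
  have hsnT : snK κ T = 0 := by
    unfold snK
    rw [if_pos hκ, hT]
    rw [mul_div_cancel₀ _ hs.ne']
    simp [Real.sin_pi]
  have hpos : ∀ᶠ t in nhdsWithin T (Set.Iio T), 0 < snK κ t := by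
    filter_upwards [Ioo_mem_nhdsLT_of_mem (Set.right_mem_Ioc.2 hT0)] with t ht
    exact snK_pos ht.1 fun _ => ht.2
  have hsn : Filter.Tendsto (snK κ) (nhdsWithin T (Set.Iio T)) (nhdsWithin 0 (Set.Ioi 0)) := by
    rw [tendsto_nhdsWithin_iff]
    refine ⟨?_, hpos⟩
    have := (snK_hasDeriv κ T).continuousAt.tendsto
    rw [hsnT] at this
    exact this.mono_left nhdsWithin_le_nhds
  have hinv : Filter.Tendsto (fun t => (snK κ t)⁻¹) (nhdsWithin T (Set.Iio T)) Filter.atTop :=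
    Filter.Tendsto.inv_tendsto_nhdsGT_zero hsn
  have hsn'T : snK' κ T = -1 := by
    unfold snK'
    rw [if_pos hκ, hT, mul_div_cancel₀ _ hs.ne']
    simp [Real.cos_pi]
  have hsn' : Filter.Tendsto (snK' κ) (nhdsWithin T (Set.Iio T)) (nhds (-1)) := by
    have := (snK'_hasDeriv κ T).continuousAt.tendsto
    rw [hsn'T] at this
    exact this.mono_left nhdsWithin_le_nhds
  have := hsn'.neg_mul_atTop (by norm_num : (-1:ℝ) < 0) hinv
  exact this.congr' (Filter.Eventually.of_forall fun t => by simp only [ctK, div_eq_mul_inv])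

lemma riccati_core (κ b : ℝ) (ρ ρ' : ℝ → ℝ)
    (hderiv : ∀ t ∈ Set.Ioo 0 b, HasDerivAt ρ (ρ' t) t)
    (hineq : ∀ t ∈ Set.Ioo 0 b, ρ' t + (ρ t) ^ 2 ≤ -κ)
    (t₀ : ℝ) (ht₀ : t₀ ∈ Set.Ioo 0 b) (hTκ : 0 < κ → t₀ < Real.pi / Real.sqrt κ) :
    ρ t₀ ≤ ctK κ t₀ := by
  by_contra hcon
  push_neg at hcon
  -- find s₁ ∈ (0, t₀) with ctK κ s₁ ≥ ρ t₀
  obtain ⟨s₁, hs₁⟩ : ∃ s₁, (0 < s₁ ∧ s₁ < t₀) ∧ ρ t₀ ≤ ctK κ s₁ := by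
    have h1 := (ctK_top κ).eventually (Filter.eventually_ge_atTop (ρ t₀))
    have h2 : ∀ᶠ s in nhdsWithin (0:ℝ) (Set.Ioi 0), 0 < s ∧ s < t₀ := by
      filter_upwards [Ioo_mem_nhdsGT_of_mem (Set.left_mem_Ico.2 ht₀.1)] with s hs
      exact ⟨hs.1, hs.2⟩
    exact ((h2.and h1).exists)
  -- snK is positive on (0, t₀]
  have hsnpos : ∀ x : ℝ, 0 < x → x ≤ t₀ → 0 < snK κ x := by
    intro x hx hxt
    exact snK_pos hx fun hk => lt_of_le_of_lt hxt (hTκ hk)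
  -- ctK continuous on [s₁, t₀]
  have hctcont : ContinuousOn (ctK κ) (Set.Icc s₁ t₀) := by
    intro x hx
    exact ((ctK_hasDeriv (hsnpos x (lt_of_lt_of_le hs₁.1.1 hx.1) hx.2).ne').continuousAt).continuousWithinAt
  -- IVT: get s₀ with ctK κ s₀ = ρ t₀
  obtain ⟨s₀, hs₀mem, hs₀⟩ : ∃ s₀ ∈ Set.Icc s₁ t₀, ctK κ s₀ = ρ t₀ :=
    intermediate_value_Icc' hs₁.1.2.le hctcont ⟨hcon.le, hs₁.2⟩
  have hs₀lt : s₀ < t₀ := by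
    rcases lt_or_eq_of_le hs₀mem.2 with h | h
    · exact h
    · rw [h] at hs₀; exact absurd hs₀ (by linarith)
  have hs₀pos : 0 < s₀ := lt_of_lt_of_le hs₁.1.1 hs₀mem.1
  set a := t₀ - s₀ with ha_def
  have ha : 0 < a := by simp [ha_def]; linarith
  have hat₀ : a < t₀ := by simp [ha_def]; linarith
  -- facts on Ioc a t₀
  have hfacts : ∀ x ∈ Set.Ioc a t₀, 0 < x - a ∧ 0 < snK κ (x - a) ∧ x ∈ Set.Ioo 0 b := by
    intro x hx
    have h1 : 0 < x - a := by linarith [hx.1]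
    have h2 : x - a ≤ s₀ := by simp [ha_def]; linarith [hx.2]
    exact ⟨h1, hsnpos _ h1 (le_trans h2 hs₀mem.2), ⟨by linarith, lt_of_le_of_lt hx.2 ht₀.2⟩⟩
  set φ : ℝ → ℝ := fun t => ctK κ (t - a) with hφ
  set sA : ℝ → ℝ := fun t => snK κ (t - a) with hsA
  set h : ℝ → ℝ := fun t => (ρ t - φ t) * (sA t) ^ 2 with hh
  -- derivative of h on Ioc a t₀
  have hhd : ∀ x ∈ Set.Ioc a t₀, HasDerivAt h
      ((ρ' x - (-(φ x)^2 - κ)) * (sA x)^2 + (ρ x - φ x) * (2 * sA x * snK' κ (x - a))) x := by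
    intro x hx
    obtain ⟨h1, h2, h3⟩ := hfacts x hx
    have dφ : HasDerivAt φ (-(φ x)^2 - κ) x := (ctK_hasDeriv h2.ne').comp_sub_const x a
    have dsA : HasDerivAt sA (snK' κ (x - a)) x := (snK_hasDeriv κ (x - a)).comp_sub_const x a
    have dsq : HasDerivAt (fun t => (sA t)^2) (2 * sA x * snK' κ (x - a)) x := by
      have := dsA.pow 2
      refine this.congr_deriv ?_
      ring
    exact ((hderiv x h3).sub dφ).mul dsq
  -- find t₁ ∈ (a, t₀) with φ t₁ > ρ t₁
  have haIoo : a ∈ Set.Ioo 0 b := ⟨ha, by linarith [ht₀.2]⟩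
  have hρcont : Filter.Tendsto ρ (nhds a) (nhds (ρ a)) := (hderiv a haIoo).continuousAt.tendsto
  obtain ⟨t₁, ht₁⟩ : ∃ t₁, ((a < t₁ ∧ t₁ < t₀) ∧ ρ t₁ < ρ a + 1) ∧ ρ a + 1 < φ t₁ := by
    have hmap : Filter.Tendsto (fun t => t - a) (nhdsWithin a (Set.Ioi a))
        (nhdsWithin 0 (Set.Ioi 0)) := by
      rw [tendsto_nhdsWithin_iff]
      constructor
      · have : Filter.Tendsto (fun t : ℝ => t - a) (nhds a) (nhds (a - a)) :=
          (continuous_id.sub continuous_const).tendsto a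
        simpa using this.mono_left nhdsWithin_le_nhds
      · filter_upwards [self_mem_nhdsWithin] with t ht
        simpa using ht
    have hφtop : Filter.Tendsto φ (nhdsWithin a (Set.Ioi a)) Filter.atTop :=
      (ctK_top κ).comp hmap
    have h1 := hφtop.eventually (Filter.eventually_gt_atTop (ρ a + 1))
    have h2 : ∀ᶠ t in nhdsWithin a (Set.Ioi a), (a < t ∧ t < t₀) ∧ ρ t < ρ a + 1 := by
      have hev : ∀ᶠ t in nhds a, ρ t < ρ a + 1 :=
        hρcont.eventually (eventually_lt_nhds (by linarith))
      filter_upwards [Ioo_mem_nhdsGT_of_mem (Set.left_mem_Ico.2 hat₀),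
        hev.filter_mono nhdsWithin_le_nhds] with t ht hρt
      exact ⟨⟨ht.1, ht.2⟩, hρt⟩
    exact (h2.and h1).exists
  -- h is antitone on [t₁, t₀]
  have hsub : Set.Icc t₁ t₀ ⊆ Set.Ioc a t₀ := fun x hx => ⟨lt_of_lt_of_le ht₁.1.1.1 hx.1, hx.2⟩
  have hanti : AntitoneOn h (Set.Icc t₁ t₀) := by
    apply antitoneOn_of_deriv_nonpos (convex_Icc t₁ t₀)
    · intro x hx
      exact ((hhd x (hsub hx)).continuousAt).continuousWithinAt
    · intro x hx
      rw [interior_Icc] at hx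
      exact ((hhd x (hsub (Set.Ioo_subset_Icc_self hx))).differentiableAt).differentiableWithinAt
    · intro x hx
      rw [interior_Icc] at hx
      have hx' := hsub (Set.Ioo_subset_Icc_self hx)
      obtain ⟨h1, h2, h3⟩ := hfacts x hx'
      rw [(hhd x hx').deriv]
      have hsn' : snK' κ (x - a) = φ x * sA x := snK'_eq h2.ne'
      rw [hsn']
      have hin := hineq x h3
      nlinarith [sq_nonneg (sA x), sq_nonneg (ρ x - φ x), sq_nonneg ((ρ x - φ x) * sA x)]
  -- conclude
  have hht₀ : h t₀ = 0 := by
    have : φ t₀ = ρ t₀ := by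
      simp only [hφ, ha_def]
      rw [show t₀ - (t₀ - s₀) = s₀ by ring, hs₀]
    simp [hh, this]
  have hht₁ : h t₁ < 0 := by
    have hsApos : 0 < sA t₁ := (hfacts t₁ ⟨ht₁.1.1.1, ht₁.1.1.2.le⟩).2.1
    have : ρ t₁ - φ t₁ < 0 := by linarith [ht₁.1.2, ht₁.2]
    exact mul_neg_of_neg_of_pos this (by positivity)
  have := hanti (Set.left_mem_Icc.2 ht₁.1.1.2.le) (Set.right_mem_Icc.2 ht₁.1.1.2.le) ht₁.1.1.2.le
  rw [hht₀] at this
  linarith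

/-- Riccati comparison estimate, first part: if `ρ' + ρ² ≤ -κ` on `(0, b)`, then
`ρ ≤ ct_κ` on `(0, b)`; moreover `b ≤ π_κ` (which is `π / √κ` for `κ > 0` and
`∞` otherwise). -/
theorem riccati_comparison_upper (κ b : ℝ) (hb : 0 < b) (ρ ρ' : ℝ → ℝ)
    (hderiv : ∀ t ∈ Set.Ioo 0 b, HasDerivAt ρ (ρ' t) t)
    (hineq : ∀ t ∈ Set.Ioo 0 b, ρ' t + (ρ t) ^ 2 ≤ -κ) :
    (∀ t ∈ Set.Ioo 0 b, ρ t ≤ ctK κ t) ∧ (0 < κ → b ≤ Real.pi / Real.sqrt κ) := by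
  have part2 : 0 < κ → b ≤ Real.pi / Real.sqrt κ := by
    intro hκ
    by_contra hlt
    push_neg at hlt
    set T := Real.pi / Real.sqrt κ with hT
    have hT0 : 0 < T := by positivity
    have hTmem : T ∈ Set.Ioo 0 b := ⟨hT0, hlt⟩
    have hρcont : Filter.Tendsto ρ (nhds T) (nhds (ρ T)) :=
      (hderiv T hTmem).continuousAt.tendsto
    have h1 := (ctK_bot hκ).eventually (Filter.eventually_lt_atBot (ρ T - 1))
    have h2 : ∀ᶠ t in nhdsWithin T (Set.Iio T), ρ T - 1 < ρ t :=
      (hρcont.eventually (eventually_gt_nhds (by linarith))).filter_mono nhdsWithin_le_nhds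
    have h3 : ∀ᶠ t in nhdsWithin T (Set.Iio T), 0 < t ∧ t < T := by
      filter_upwards [Ioo_mem_nhdsLT_of_mem (Set.right_mem_Ioc.2 hT0)] with t ht
      exact ⟨ht.1, ht.2⟩
    obtain ⟨t, ⟨⟨ht0, htT⟩, hρt⟩, hct⟩ := ((h3.and h2).and h1).exists
    have hle : ρ t ≤ ctK κ t :=
      riccati_core κ b ρ ρ' hderiv hineq t ⟨ht0, htT.trans hlt⟩ fun _ => htT
    linarith
  refine ⟨fun t ht => ?_, part2⟩
  apply riccati_core κ b ρ ρ' hderiv hineq t ht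
  intro hκ
  exact lt_of_lt_of_le ht.2 (part2 hκ)
end

section
/- For all skew-symmetric real matrices A, B of size n×n, the Frobenius norm of the commutator satisfies ‖AB − BA‖_F ≤ ‖A‖_F · ‖B‖_F. -/
open Matrix

/-- The Frobenius norm of a real square matrix. -/
noncomputable def frobNorm {n : ℕ} (A : Matrix (Fin n) (Fin n) ℝ) : ℝ :=
  Real.sqrt (∑ i, ∑ j, (A i j) ^ 2)

namespace BlochIserlesAux

open Finset Complex

variable {n : ℕ}

/-- Squared Frobenius norm of a complex matrix. -/
noncomputable def fsq (X : Matrix (Fin n) (Fin n) ℂ) : ℝ :=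
  ∑ i, ∑ j, Complex.normSq (X i j)

lemma fsq_nonneg (X : Matrix (Fin n) (Fin n) ℂ) : 0 ≤ fsq X := by
  apply Finset.sum_nonneg; intro i _
  apply Finset.sum_nonneg; intro j _
  exact Complex.normSq_nonneg _

lemma fsq_eq_trace (X : Matrix (Fin n) (Fin n) ℂ) :
    (fsq X : ℂ) = Matrix.trace (Xᴴ * X) := by
  unfold fsq Matrix.trace
  push_cast
  rw [Finset.sum_comm]
  apply Finset.sum_congr rfl
  intro i _
  simp only [Matrix.diag_apply, Matrix.mul_apply, Matrix.conjTranspose_apply]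
  apply Finset.sum_congr rfl
  intro j _
  rw [Complex.normSq_eq_conj_mul_self]
  rfl

lemma fsq_conj (u X : Matrix (Fin n) (Fin n) ℂ) (hu : u * star u = 1) :
    fsq (star u * X * u) = fsq X := by
  have h : ((fsq (star u * X * u) : ℂ)) = (fsq X : ℂ) := by
    rw [fsq_eq_trace, fsq_eq_trace]
    have hct : (star u * X * u)ᴴ = star u * Xᴴ * u := by
      simp [Matrix.conjTranspose_mul, Matrix.mul_assoc, Matrix.star_eq_conjTranspose]
    rw [hct]
    have : star u * Xᴴ * u * (star u * X * u) = star u * (Xᴴ * X) * u := by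
      calc star u * Xᴴ * u * (star u * X * u)
          = star u * Xᴴ * (u * star u) * X * u := by
            simp only [Matrix.mul_assoc]
        _ = star u * (Xᴴ * X) * u := by rw [hu]; simp only [Matrix.mul_one, Matrix.mul_assoc]
    rw [this, Matrix.trace_mul_comm, ← Matrix.mul_assoc, hu, Matrix.one_mul]
  exact_mod_cast h

/-- Cardinality comparison from a unitarily-columned matrix with support condition. -/
lemma card_le_aux (G : Matrix (Fin n) (Fin n) ℂ) (hG : star G * G = 1)
    (S T : Finset (Fin n)) (h : ∀ j ∈ S, ∀ m, m ∉ T → G m j = 0) :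
    S.card ≤ T.card := by
  classical
  set P : Matrix T S ℂ := Matrix.of (fun t s => G t s) with hP
  have hPP : Pᴴ * P = 1 := by
    ext s s'
    have h1 : (Pᴴ * P) s s' = ∑ t : T, (starRingEnd ℂ) (G t s) * G t s' := by
      simp [Matrix.mul_apply, Matrix.conjTranspose_apply, hP]
    have h2 : ∑ t : T, (starRingEnd ℂ) (G ↑t s) * G ↑t s'
        = ∑ m ∈ T, (starRingEnd ℂ) (G m s) * G m s' :=
      Finset.sum_coe_sort T (fun m => (starRingEnd ℂ) (G m s) * G m s')
    have h3 : ∑ m ∈ T, (starRingEnd ℂ) (G m s) * G m s'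
        = ∑ m, (starRingEnd ℂ) (G m s) * G m s' := by
      apply Finset.sum_subset (Finset.subset_univ T)
      intro m _ hm
      rw [h s s.2 m hm]
      simp
    have h4 : ∑ m, (starRingEnd ℂ) (G m s) * G m s' = (star G * G) (s : Fin n) s' := by
      simp [Matrix.mul_apply, Matrix.star_eq_conjTranspose, Matrix.conjTranspose_apply]
    rw [h1, h2, h3, h4, hG]
    by_cases hss : s = s'
    · subst hss; simp
    · have : (s : Fin n) ≠ (s' : Fin n) := by
        simp only [ne_eq, Subtype.coe_inj]; exact hss
      simp [Matrix.one_apply, hss, this]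
  have hrank : (1 : Matrix S S ℂ).rank = S.card := by
    rw [Matrix.rank_one]
    exact Fintype.card_coe S
  calc S.card = (1 : Matrix S S ℂ).rank := hrank.symm
    _ = (Pᴴ * P).rank := by rw [hPP]
    _ ≤ P.rank := Matrix.rank_mul_le_right _ _
    _ ≤ Fintype.card T := Matrix.rank_le_card_height P
    _ = T.card := Fintype.card_coe T

/-- The key combinatorial inequality. -/
lemma key (μ : Fin n → ℝ) (b G : Matrix (Fin n) (Fin n) ℂ)
    (hG1 : star G * G = 1)
    (hGsym : Gᵀ = G)
    (hsupp : ∀ m j, μ m ≠ -μ j → G m j = 0)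
    (hb : bᵀ = -(star G * b * G)) :
    ∑ j, ∑ k, (μ j - μ k) ^ 2 * Complex.normSq (b j k)
      ≤ (∑ m, μ m ^ 2) * ∑ j, ∑ k, Complex.normSq (b j k) := by
  classical
  set s : ℝ := ∑ m, μ m ^ 2 with hs
  have hs0 : 0 ≤ s := Finset.sum_nonneg fun m _ => sq_nonneg _
  -- column norms of G
  have colnorm : ∀ j, ∑ m, Complex.normSq (G m j) = 1 := by
    intro j
    have h1 : (star G * G) j j = 1 := by rw [hG1]; simp
    have h2 : (star G * G) j j = ∑ m, ((Complex.normSq (G m j) : ℂ)) := by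
      simp only [Matrix.mul_apply, Matrix.star_eq_conjTranspose, Matrix.conjTranspose_apply]
      apply Finset.sum_congr rfl
      intro m _
      rw [Complex.normSq_eq_conj_mul_self]
      rfl
    rw [h2] at h1
    have : ((∑ m, Complex.normSq (G m j) : ℝ) : ℂ) = 1 := by push_cast; exact h1
    exact_mod_cast this
  -- every value -μ j is attained
  have exists_neg : ∀ j, ∃ m, μ m = -μ j := by
    intro j
    by_contra hcon
    push_neg at hcon
    have : ∑ m, Complex.normSq (G m j) = 0 := by
      apply Finset.sum_eq_zero
      intro m _
      rw [hsupp m j (hcon m), Complex.normSq_zero]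
    rw [colnorm j] at this
    norm_num at this
  -- multiplicity comparison
  have cardLe : ∀ t : ℝ, (Finset.univ.filter (fun m => μ m = t)).card
      ≤ (Finset.univ.filter (fun m => μ m = -t)).card := by
    intro t
    apply card_le_aux G hG1
    intro j hj m hm
    simp only [Finset.mem_filter, Finset.mem_univ, true_and] at hj hm
    apply hsupp
    rw [hj]
    exact fun hc => hm hc
  -- pointwise bound
  have pointwise : ∀ j k, b j k ≠ 0 → (μ j - μ k) ^ 2 ≤ s := by
    intro j k hbjk
    by_cases hac : μ j = μ k
    · have hz : (μ j - μ k) ^ 2 = 0 := by rw [hac]; ring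
      rw [hz]; exact hs0
    have hjk : j ≠ k := fun h => hac (by rw [h])
    by_cases h2 : μ k = -μ j
    · -- hard case
      have ha0 : μ j ≠ 0 := by
        intro h0
        apply hac
        rw [h2, h0]
        ring
      set Ip := Finset.univ.filter (fun m => μ m = μ j) with hIp
      set Im := Finset.univ.filter (fun m => μ m = -μ j) with hIm
      have hj : j ∈ Ip := by simp [hIp]
      have hk : k ∈ Im := by simp [hIm, h2]
      have hd : Ip.card = Im.card := by
        apply le_antisymm (cardLe (μ j))
        have := cardLe (-μ j)
        simpa using this
      have hdisj : Disjoint Ip Im := by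
        rw [Finset.disjoint_filter]
        intro m _ hm1 hm2
        rw [hm1] at hm2
        exact ha0 (by linarith)
      rcases Nat.lt_or_ge Ip.card 2 with h1 | hcard2
      · -- multiplicity 1 : the entry must vanish
        exfalso
        have hIp1 : Ip = {j} := by
          apply Finset.eq_singleton_iff_unique_mem.mpr
          refine ⟨hj, fun x hx => ?_⟩
          by_contra hxj
          have : ({j, x} : Finset (Fin n)) ⊆ Ip := by
            intro y hy
            simp only [Finset.mem_insert, Finset.mem_singleton] at hy
            rcases hy with rfl | rfl
            · exact hj
            · exact hx
          have hcard : ({j, x} : Finset (Fin n)).card = 2 := by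
            rw [Finset.card_insert_of_notMem (by simpa using Ne.symm hxj)]
            simp
          have := Finset.card_le_card this
          omega
        have hIm1 : Im = {k} := by
          have hImle : Im.card ≤ 1 := by
            rw [← hd, hIp1]; simp
          apply Finset.eq_singleton_iff_unique_mem.mpr
          refine ⟨hk, fun x hx => ?_⟩
          by_contra hxk
          have : ({k, x} : Finset (Fin n)) ⊆ Im := by
            intro y hy
            simp only [Finset.mem_insert, Finset.mem_singleton] at hy
            rcases hy with rfl | rfl
            · exact hk
            · exact hx
          have hcard : ({k, x} : Finset (Fin n)).card = 2 := by
            rw [Finset.card_insert_of_notMem (by simpa using Ne.symm hxk)]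
            simp
          have := Finset.card_le_card this
          omega
        have hmem_p : ∀ m, μ m = μ j → m = j := by
          intro m hm
          have : m ∈ Ip := by simp [hIp, hm]
          rw [hIp1] at this; simpa using this
        have hmem_m : ∀ m, μ m = -μ j → m = k := by
          intro m hm
          have : m ∈ Im := by simp [hIm, hm]
          rw [hIm1] at this; simpa using this
        -- evaluate the relation at entry (k, j)
        have hbt := congrFun (congrFun hb k) j
        have hlhs : bᵀ k j = b j k := rfl
        have hGsym' : ∀ p q, G p q = G q p := by
          intro p q
          have := congrFun (congrFun hGsym p) q
          simpa [Matrix.transpose_apply] using this.symm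
        have hrhs : (star G * b * G) k j
            = (starRingEnd ℂ) (G j k) * b j k * G k j := by
          rw [Matrix.mul_apply]
          rw [Finset.sum_eq_single k]
          · rw [Matrix.mul_apply, Finset.sum_eq_single j]
            · simp [Matrix.star_eq_conjTranspose, Matrix.conjTranspose_apply]
            · intro m _ hmj
              have : G m k = 0 := by
                apply hsupp
                intro hc
                apply hmj
                apply hmem_p
                rw [hc, h2, neg_neg]
              simp [Matrix.star_eq_conjTranspose, Matrix.conjTranspose_apply, this]
            · intro h; exact absurd (Finset.mem_univ j) h
          · intro l _ hlk
            have : G l j = 0 := by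
              apply hsupp
              intro hc
              exact hlk (hmem_m l hc)
            simp [this]
          · intro h; exact absurd (Finset.mem_univ k) h
        have hnorm1 : Complex.normSq (G k j) = 1 := by
          have := colnorm j
          rw [Finset.sum_eq_single k] at this
          · exact this
          · intro m _ hmk
            have : G m j = 0 := by
              apply hsupp
              intro hc
              exact hmk (hmem_m m hc)
            simp [this]
          · intro h; exact absurd (Finset.mem_univ k) h
        have hstart : b j k = -((starRingEnd ℂ) (G j k) * b j k * G k j) := by
          rw [hlhs, Matrix.neg_apply, hrhs] at hbt
          exact hbt
        have hmul : (starRingEnd ℂ) (G k j) * G k j = 1 := by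
          have h := Complex.normSq_eq_conj_mul_self (z := G k j)
          rw [hnorm1] at h
          simpa using h.symm
        have hfin : b j k = -(b j k) := by
          calc b j k = -((starRingEnd ℂ) (G j k) * b j k * G k j) := hstart
            _ = -(((starRingEnd ℂ) (G k j) * G k j) * b j k) := by
                rw [hGsym' j k]; ring
            _ = -(b j k) := by rw [hmul, one_mul]
        exact hbjk (by linear_combination hfin / 2)
      · -- multiplicity ≥ 2
        have hImcard : 2 ≤ Im.card := hd ▸ hcard2
        have hsub : ∑ m ∈ Ip ∪ Im, μ m ^ 2 ≤ s := by
          apply Finset.sum_le_sum_of_subset_of_nonneg (Finset.subset_univ _)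
          intro m _ _
          exact sq_nonneg _
        have hsum : ∑ m ∈ Ip ∪ Im, μ m ^ 2
            = (Ip.card : ℝ) * μ j ^ 2 + (Im.card : ℝ) * μ j ^ 2 := by
          rw [Finset.sum_union hdisj]
          congr 1
          · rw [Finset.sum_congr rfl (fun m hm => ?_), Finset.sum_const, nsmul_eq_mul]
            simp only [hIp, Finset.mem_filter] at hm
            rw [hm.2]
          · rw [Finset.sum_congr rfl (fun m hm => ?_), Finset.sum_const, nsmul_eq_mul]
            simp only [hIm, Finset.mem_filter] at hm
            rw [hm.2, neg_sq]
        have h4 : 4 * μ j ^ 2 ≤ s := by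
          have hip : (2 : ℝ) ≤ (Ip.card : ℝ) := by exact_mod_cast hcard2
          have him : (2 : ℝ) ≤ (Im.card : ℝ) := by exact_mod_cast hImcard
          nlinarith [sq_nonneg (μ j)]
        rw [h2]
        nlinarith
    · -- μ k ≠ -μ j
      obtain ⟨m, hm⟩ := exists_neg j
      obtain ⟨l, hl⟩ := exists_neg k
      by_cases hsign : 0 ≤ μ j * μ k
      · have hpair : μ j ^ 2 + μ k ^ 2 ≤ s := by
          have hsub : ∑ i ∈ ({j, k} : Finset (Fin n)), μ i ^ 2 ≤ s :=
            Finset.sum_le_sum_of_subset_of_nonneg (Finset.subset_univ _)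
              (fun i _ _ => sq_nonneg _)
          rwa [Finset.sum_insert (by simpa using hjk), Finset.sum_singleton] at hsub
        nlinarith
      · push_neg at hsign
        have ha0 : μ j ≠ 0 := fun h => by rw [h] at hsign; simp at hsign
        have hc0 : μ k ≠ 0 := fun h => by rw [h] at hsign; simp at hsign
        have hjm : j ≠ m := fun h => ha0 (by rw [h] at hm ⊢; linarith)
        have hjl : j ≠ l := by
          intro h
          apply h2
          rw [← h] at hl
          linarith
        have hkm : k ≠ m := by
          intro h
          apply h2
          rw [← h] at hm
          linarith
        have hkl : k ≠ l := fun h => hc0 (by rw [h] at hl ⊢; linarith)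
        have hml : m ≠ l := by
          intro h
          apply hac
          rw [h] at hm
          rw [hm] at hl
          linarith
        have hquad : μ j ^ 2 + μ k ^ 2 + μ j ^ 2 + μ k ^ 2 ≤ s := by
          have hsub : ∑ i ∈ ({j, k, m, l} : Finset (Fin n)), μ i ^ 2 ≤ s :=
            Finset.sum_le_sum_of_subset_of_nonneg (Finset.subset_univ _)
              (fun i _ _ => sq_nonneg _)
          have e1 : ∑ i ∈ ({j, k, m, l} : Finset (Fin n)), μ i ^ 2
              = μ j ^ 2 + (μ k ^ 2 + (μ m ^ 2 + μ l ^ 2)) := by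
            rw [Finset.sum_insert (by simp [hjk, hjm, hjl]),
              Finset.sum_insert (by simp [hkm, hkl]),
              Finset.sum_insert (by simp [hml]), Finset.sum_singleton]
          rw [e1] at hsub
          rw [hm, hl] at hsub
          nlinarith [hsub]
        nlinarith [sq_nonneg (μ j + μ k)]
  -- sum it up
  calc ∑ j, ∑ k, (μ j - μ k) ^ 2 * Complex.normSq (b j k)
      ≤ ∑ j, ∑ k, s * Complex.normSq (b j k) := by
        apply Finset.sum_le_sum
        intro j _
        apply Finset.sum_le_sum
        intro k _
        rcases eq_or_ne (b j k) 0 with h | h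
        · simp [h]
        · exact mul_le_mul_of_nonneg_right (pointwise j k h) (Complex.normSq_nonneg _)
    _ = s * ∑ j, ∑ k, Complex.normSq (b j k) := by
        rw [Finset.mul_sum]
        apply Finset.sum_congr rfl
        intro j _
        rw [Finset.mul_sum]

end BlochIserlesAux

set_option maxHeartbeats 1000000 in
open BlochIserlesAux Complex in
/-- The Bloch–Iserles inequality: for skew-symmetric matrices,
`‖AB − BA‖_F ≤ ‖A‖_F ‖B‖_F`. -/
theorem bloch_iserles {n : ℕ} (A B : Matrix (Fin n) (Fin n) ℝ)
    (hA : Aᵀ = -A) (hB : Bᵀ = -B) :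
    frobNorm (A * B - B * A) ≤ frobNorm A * frobNorm B := by
  classical
  -- the complexified matrices
  set φ : ℝ →+* ℂ := Complex.ofRealHom
  set M : Matrix (Fin n) (Fin n) ℂ := A.map φ with hM
  set N : Matrix (Fin n) (Fin n) ℂ := B.map φ with hN
  have hMt : Mᵀ = -M := by
    ext i j
    simp only [Matrix.transpose_apply, Matrix.map_apply, Matrix.neg_apply, hM]
    rw [← Matrix.transpose_apply A j i, hA]
    simp
  have hNt : Nᵀ = -N := by
    ext i j
    simp only [Matrix.transpose_apply, Matrix.map_apply, Matrix.neg_apply, hN]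
    rw [← Matrix.transpose_apply B j i, hB]
    simp
  -- fsq of mapped real matrices
  have fsq_map : ∀ X : Matrix (Fin n) (Fin n) ℝ,
      fsq (X.map φ) = ∑ i, ∑ j, (X i j) ^ 2 := by
    intro X
    unfold fsq
    apply Finset.sum_congr rfl; intro i _
    apply Finset.sum_congr rfl; intro j _
    simp [Matrix.map_apply, Complex.normSq_ofReal, sq, φ]
  -- the Hermitian matrix i•A
  set H : Matrix (Fin n) (Fin n) ℂ := Complex.I • M with hH_def
  have hMH : M = (-Complex.I) • H := by
    rw [hH_def, smul_smul]
    simp [Complex.I_mul_I]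
  have hMconjT : Mᴴ = -M := by
    have h : Mᴴ = Mᵀ := by
      ext i j
      simp [Matrix.conjTranspose_apply, Matrix.transpose_apply, hM, Matrix.map_apply,
        Complex.conj_ofReal, φ]
    rw [h, hMt]
  have hH : H.IsHermitian := by
    unfold Matrix.IsHermitian
    rw [hH_def, Matrix.conjTranspose_smul, hMconjT]
    simp [Complex.conj_I]
  set u : Matrix (Fin n) (Fin n) ℂ := (hH.eigenvectorUnitary : Matrix (Fin n) (Fin n) ℂ)
    with hu_def
  set μ : Fin n → ℝ := hH.eigenvalues with hμ_def
  have hu2 : u * star u = 1 := Matrix.mem_unitaryGroup_iff.mp (hH.eigenvectorUnitary).2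
  have hu1 : star u * u = 1 := Matrix.mem_unitaryGroup_iff'.mp (hH.eigenvectorUnitary).2
  set D : Matrix (Fin n) (Fin n) ℂ := Matrix.diagonal (fun i => (μ i : ℂ)) with hD_def
  have hdiag : star u * H * u = D := by
    have h := hH.conjStarAlgAut_star_eigenvectorUnitary
    simp only [Unitary.conjStarAlgAut_apply, Unitary.coe_star, star_star] at h
    rw [hD_def]
    convert h using 2
    all_goals rfl
  have hspec : H = u * D * star u := by
    rw [← hdiag]
    calc H = (u * star u) * H * (u * star u) := by rw [hu2]; simp
      _ = u * (star u * H * u) * star u := by simp only [Matrix.mul_assoc]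
  -- entrywise conjugation
  set cj : Matrix (Fin n) (Fin n) ℂ → Matrix (Fin n) (Fin n) ℂ :=
    fun X => X.map (starRingEnd ℂ) with hcj_def
  have hcj_mul : ∀ X Y : Matrix (Fin n) (Fin n) ℂ, cj (X * Y) = cj X * cj Y := by
    intro X Y
    exact Matrix.map_mul
  have hcj_one : cj (1 : Matrix (Fin n) (Fin n) ℂ) = 1 := by
    rw [hcj_def]
    exact Matrix.map_one _ (map_zero _) (map_one _)
  set uc : Matrix (Fin n) (Fin n) ℂ := cj u with huc_def
  have hsucT : (star u)ᵀ = uc := by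
    ext i j
    simp [Matrix.transpose_apply, Matrix.star_eq_conjTranspose, Matrix.conjTranspose_apply,
      huc_def, hcj_def, Matrix.map_apply]
  have hcj_su : cj (star u) = uᵀ := by
    ext i j
    simp [Matrix.transpose_apply, Matrix.star_eq_conjTranspose, Matrix.conjTranspose_apply,
      hcj_def, Matrix.map_apply]
  have hucT : ucᵀ = star u := by
    ext i j
    simp [Matrix.transpose_apply, Matrix.star_eq_conjTranspose, Matrix.conjTranspose_apply,
      huc_def, hcj_def, Matrix.map_apply]
  have hstar_uc : star uc = uᵀ := by
    ext i j
    simp [Matrix.transpose_apply, Matrix.star_eq_conjTranspose, Matrix.conjTranspose_apply,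
      huc_def, hcj_def, Matrix.map_apply]
  have huct : uc * uᵀ = 1 := by
    rw [← hcj_su, ← hcj_mul, hu2, hcj_one]
  have htuc : uᵀ * uc = 1 := by
    rw [← hcj_su, ← hcj_mul, hu1, hcj_one]
  set G : Matrix (Fin n) (Fin n) ℂ := star u * uc with hG_def
  have hGsym : Gᵀ = G := by
    rw [hG_def, Matrix.transpose_mul, hucT, hsucT]
  have hstarG : star G = uᵀ * u := by
    rw [hG_def, Matrix.star_eq_conjTranspose, Matrix.conjTranspose_mul]
    rw [← Matrix.star_eq_conjTranspose, ← Matrix.star_eq_conjTranspose, hstar_uc, star_star]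
  have hG1 : star G * G = 1 := by
    rw [hstarG, hG_def]
    calc uᵀ * u * (star u * uc) = uᵀ * (u * star u) * uc := by simp only [Matrix.mul_assoc]
      _ = 1 := by rw [hu2, Matrix.mul_one, htuc]
  -- conjugation of H and D
  have hcjD : cj D = D := by
    ext i j
    rcases eq_or_ne i j with rfl | hij
    · simp [hcj_def, hD_def, Matrix.map_apply, Matrix.diagonal_apply_eq, Complex.conj_ofReal]
    · simp [hcj_def, hD_def, Matrix.map_apply, Matrix.diagonal_apply_ne _ hij]
  have hcjH : cj H = -H := by
    ext i j
    simp only [hcj_def, Matrix.map_apply, hH_def, Matrix.smul_apply, Matrix.neg_apply,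
      smul_eq_mul, _root_.map_mul, Complex.conj_I, hM]
    simp [Matrix.map_apply, Complex.conj_ofReal, φ]
  have hHuc : H * uc = -(uc * D) := by
    have h1 : cj H = uc * D * uᵀ := by
      rw [hspec, hcj_mul, hcj_mul, hcjD, hcj_su, huc_def]
    have h2 : -H = uc * D * uᵀ := by rw [← h1, hcjH]
    calc H * uc = -(-H * uc) := by simp
      _ = -(uc * D * (uᵀ * uc)) := by rw [h2]; simp only [Matrix.mul_assoc]
      _ = -(uc * D) := by rw [htuc, Matrix.mul_one]
  have hDG : D * G = -(G * D) := by
    calc D * G = (star u * H * u) * (star u * uc) := by rw [hdiag]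
      _ = star u * H * (u * star u) * uc := by simp only [Matrix.mul_assoc]
      _ = star u * (H * uc) := by rw [hu2]; simp only [Matrix.mul_one, Matrix.mul_assoc]
      _ = -(star u * (uc * D)) := by rw [hHuc]; simp
      _ = -(G * D) := by rw [hG_def]; simp only [Matrix.mul_assoc]
  have hsuppG : ∀ m j, μ m ≠ -μ j → G m j = 0 := by
    intro m j hmj
    have h1 := congrFun (congrFun hDG m) j
    have h2 : (D * G) m j = (μ m : ℂ) * G m j := by
      rw [hD_def, Matrix.diagonal_mul]
    have h3 : (-(G * D)) m j = -(G m j * (μ j : ℂ)) := by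
      rw [Matrix.neg_apply, hD_def, Matrix.mul_diagonal]
    rw [h2, h3] at h1
    have h4 : ((μ m + μ j : ℝ) : ℂ) * G m j = 0 := by
      push_cast
      linear_combination h1
    rcases mul_eq_zero.mp h4 with h5 | h5
    · exfalso
      apply hmj
      have : (μ m + μ j : ℝ) = 0 := by exact_mod_cast h5
      linarith
    · exact h5
  -- the conjugated B
  set b : Matrix (Fin n) (Fin n) ℂ := star u * N * u with hb_def
  have hbT : bᵀ = -(star G * b * G) := by
    have h1 : bᵀ = -(uᵀ * N * uc) := by
      rw [hb_def, Matrix.transpose_mul, Matrix.transpose_mul, hsucT, hNt]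
      simp [Matrix.mul_assoc]
    have h2 : star G * b * G = uᵀ * N * uc := by
      rw [hstarG, hb_def, hG_def]
      calc uᵀ * u * (star u * N * u) * (star u * uc)
          = uᵀ * (u * star u) * N * (u * star u) * uc := by simp only [Matrix.mul_assoc]
        _ = uᵀ * N * uc := by rw [hu2]; simp only [Matrix.mul_one, Matrix.mul_assoc, Matrix.one_mul]
    rw [h1, h2]
  -- the commutator in the eigenbasis
  have hsuMu : star u * M * u = (-Complex.I) • D := by
    rw [hMH, Matrix.mul_smul, Matrix.smul_mul, hdiag]
  have hconjC : star u * (M * N - N * M) * u = (-Complex.I) • (D * b - b * D) := by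
    have hMN : star u * (M * N) * u = (star u * M * u) * (star u * N * u) := by
      calc star u * (M * N) * u = star u * M * (u * star u) * N * u := by
            rw [hu2]; simp only [Matrix.mul_one, Matrix.mul_assoc]
        _ = (star u * M * u) * (star u * N * u) := by simp only [Matrix.mul_assoc]
    have hNM : star u * (N * M) * u = (star u * N * u) * (star u * M * u) := by
      calc star u * (N * M) * u = star u * N * (u * star u) * M * u := by
            rw [hu2]; simp only [Matrix.mul_one, Matrix.mul_assoc]
        _ = (star u * N * u) * (star u * M * u) := by simp only [Matrix.mul_assoc]
    have hsub : star u * (M * N - N * M) * u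
        = star u * (M * N) * u - star u * (N * M) * u := by
      rw [Matrix.mul_sub, Matrix.sub_mul]
    rw [hsub, hMN, hNM, hsuMu, ← hb_def]
    rw [Matrix.smul_mul, Matrix.mul_smul, smul_sub]
  -- Frobenius norm computations
  have hfsqC : fsq ((A * B - B * A).map φ) = ∑ j, ∑ k, (μ j - μ k) ^ 2
      * Complex.normSq (b j k) := by
    have hmapC : (A * B - B * A).map φ = M * N - N * M := by
      ext i j
      simp only [Matrix.map_apply, Matrix.sub_apply, Matrix.mul_apply, hM, hN,
        map_sub, map_sum, _root_.map_mul]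
    rw [hmapC, ← fsq_conj u (M * N - N * M) hu2, hconjC]
    unfold fsq
    apply Finset.sum_congr rfl; intro j _
    apply Finset.sum_congr rfl; intro k _
    have hentry : ((-Complex.I) • (D * b - b * D)) j k
        = (-Complex.I) * (((μ j - μ k : ℝ) : ℂ) * b j k) := by
      rw [Matrix.smul_apply, Matrix.sub_apply, hD_def, Matrix.diagonal_mul, Matrix.mul_diagonal]
      simp only [smul_eq_mul]
      push_cast
      ring
    rw [hentry, Complex.normSq_mul, Complex.normSq_mul, Complex.normSq_neg, Complex.normSq_I,
      Complex.normSq_ofReal]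
    ring
  have hfsqD : fsq D = ∑ m, μ m ^ 2 := by
    unfold fsq
    apply Finset.sum_congr rfl; intro i _
    rw [Finset.sum_eq_single i]
    · rw [hD_def, Matrix.diagonal_apply_eq]
      simp [Complex.normSq_ofReal, sq]
    · intro j _ hji
      rw [hD_def, Matrix.diagonal_apply_ne _ (Ne.symm hji)]
      simp
    · intro h; exact absurd (Finset.mem_univ i) h
  have hfsqH : fsq H = fsq M := by
    unfold fsq
    apply Finset.sum_congr rfl; intro i _
    apply Finset.sum_congr rfl; intro j _
    rw [hH_def, Matrix.smul_apply]
    simp [Complex.normSq_mul]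
  have hμA : ∑ m, μ m ^ 2 = ∑ i, ∑ j, (A i j) ^ 2 := by
    rw [← hfsqD, ← hdiag, fsq_conj u H hu2, hfsqH, hM, fsq_map]
  have hbB : (∑ j, ∑ k, Complex.normSq (b j k)) = ∑ i, ∑ j, (B i j) ^ 2 := by
    have h1 : (∑ j, ∑ k, Complex.normSq (b j k)) = fsq b := rfl
    rw [h1, hb_def, fsq_conj u N hu2, hN, fsq_map]
  -- apply the key lemma
  have key2 : ∑ i, ∑ j, ((A * B - B * A) i j) ^ 2
      ≤ (∑ i, ∑ j, (A i j) ^ 2) * (∑ i, ∑ j, (B i j) ^ 2) := by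
    have hL : ∑ i, ∑ j, ((A * B - B * A) i j) ^ 2 = fsq ((A * B - B * A).map φ) :=
      (fsq_map _).symm
    rw [hL, hfsqC, ← hμA, ← hbB]
    exact key μ b G hG1 hGsym hsuppG hbT
  -- conclude
  unfold frobNorm
  rw [← Real.sqrt_mul (by positivity)]
  exact Real.sqrt_le_sqrt key2
end

section
/- Let Φ : V × V → W be a symmetric bilinear map between real inner product spaces with V finite-dimensional. Then sup over unit vectors u, v of ‖Φ(u,v)‖ equals sup over unit vectors u of ‖Φ(u,u)‖. -/
/-- For a symmetric bilinear map `Φ` on a finite-dimensional real inner product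
space with values in a normed space, the supremum of `‖Φ(u, v)‖` over unit
vectors `u, v` equals the supremum of `‖Φ(u, u)‖` over unit vectors `u`. -/
theorem symmetric_bilinear_sup_diag {V W : Type*}
    [NormedAddCommGroup V] [InnerProductSpace ℝ V] [FiniteDimensional ℝ V]
    [NormedAddCommGroup W] [NormedSpace ℝ W]
    (Φ : V →ₗ[ℝ] V →ₗ[ℝ] W) (hsymm : ∀ u v : V, Φ u v = Φ v u) :
    sSup {x : ℝ | ∃ u v : V, ‖u‖ = 1 ∧ ‖v‖ = 1 ∧ x = ‖Φ u v‖} =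
      sSup {x : ℝ | ∃ u : V, ‖u‖ = 1 ∧ x = ‖Φ u u‖} := by
  set A := {x : ℝ | ∃ u v : V, ‖u‖ = 1 ∧ ‖v‖ = 1 ∧ x = ‖Φ u v‖} with hA
  set B := {x : ℝ | ∃ u : V, ‖u‖ = 1 ∧ x = ‖Φ u u‖} with hB
  -- boundedness of Φ
  set L : V →ₗ[ℝ] (V →L[ℝ] W) :=
    (LinearMap.toContinuousLinearMap : (V →ₗ[ℝ] W) ≃ₗ[ℝ] (V →L[ℝ] W)).toLinearMap.comp Φ
    with hL
  have hLapp : ∀ u v : V, L u v = Φ u v := fun u v => rfl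
  set Lc : V →L[ℝ] (V →L[ℝ] W) := LinearMap.toContinuousLinearMap L with hLc
  have hbound : ∀ u v : V, ‖Φ u v‖ ≤ ‖Lc‖ * ‖u‖ * ‖v‖ := by
    intro u v
    have h1 : ‖Lc u v‖ ≤ ‖Lc u‖ * ‖v‖ := (Lc u).le_opNorm v
    have h2 : ‖Lc u‖ ≤ ‖Lc‖ * ‖u‖ := Lc.le_opNorm u
    have : ‖Lc u v‖ ≤ ‖Lc‖ * ‖u‖ * ‖v‖ :=
      h1.trans (mul_le_mul_of_nonneg_right h2 (norm_nonneg v))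
    exact this
  have hbdA : BddAbove A := by
    refine ⟨‖Lc‖, ?_⟩
    rintro x ⟨u, v, hu, hv, rfl⟩
    have := hbound u v
    simpa [hu, hv] using this
  have hBsubA : B ⊆ A := by
    rintro x ⟨u, hu, rfl⟩
    exact ⟨u, u, hu, hu, rfl⟩
  have hbdB : BddAbove B := hbdA.mono hBsubA
  by_cases hne : ∃ u : V, ‖u‖ = 1
  · obtain ⟨u₀, hu₀⟩ := hne
    have hBne : B.Nonempty := ⟨‖Φ u₀ u₀‖, u₀, hu₀, rfl⟩
    have hAne : A.Nonempty := ⟨‖Φ u₀ u₀‖, u₀, u₀, hu₀, hu₀, rfl⟩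
    have hS0 : 0 ≤ sSup B := le_trans (norm_nonneg _) (le_csSup hbdB ⟨u₀, hu₀, rfl⟩)
    -- key: ‖Φ w w‖ ≤ sSup B * ‖w‖^2
    have hkey : ∀ w : V, ‖Φ w w‖ ≤ sSup B * ‖w‖ ^ 2 := by
      intro w
      rcases eq_or_ne w 0 with rfl | hw
      · simp
      · set u := ‖w‖⁻¹ • w with hu
        have hnw : ‖w‖ ≠ 0 := norm_ne_zero_iff.mpr hw
        have hu1 : ‖u‖ = 1 := by
          rw [hu, norm_smul]
          simp [abs_of_nonneg (norm_nonneg w), inv_mul_cancel₀ hnw]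
        have hmem : ‖Φ u u‖ ∈ B := ⟨u, hu1, rfl⟩
        have h1 : ‖Φ u u‖ ≤ sSup B := le_csSup hbdB hmem
        have h2 : Φ w w = (‖w‖ ^ 2) • Φ u u := by
          rw [hu]
          simp only [map_smul, LinearMap.smul_apply, smul_smul]
          have hone : ‖w‖ ^ 2 * (‖w‖⁻¹ * ‖w‖⁻¹) = 1 := by
            field_simp
          rw [hone, one_smul]
        rw [h2, norm_smul, Real.norm_of_nonneg (by positivity : (0:ℝ) ≤ ‖w‖ ^ 2)]
        calc ‖w‖ ^ 2 * ‖Φ u u‖ ≤ ‖w‖ ^ 2 * sSup B :=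
              mul_le_mul_of_nonneg_left h1 (by positivity)
          _ = sSup B * ‖w‖ ^ 2 := mul_comm _ _
    refine le_antisymm ?_ (csSup_le_csSup hbdA hBne hBsubA)
    refine csSup_le hAne ?_
    rintro x ⟨u, v, hu, hv, rfl⟩
    -- polarisation
    have hpol : (4 : ℝ) • Φ u v = Φ (u + v) (u + v) - Φ (u - v) (u - v) := by
      simp only [map_add, map_sub, LinearMap.add_apply, LinearMap.sub_apply, hsymm v u]
      module
    have h4 : (4 : ℝ) * ‖Φ u v‖ ≤ ‖Φ (u + v) (u + v)‖ + ‖Φ (u - v) (u - v)‖ := by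
      calc (4 : ℝ) * ‖Φ u v‖ = ‖(4 : ℝ) • Φ u v‖ := by
            rw [norm_smul]; norm_num
        _ = ‖Φ (u + v) (u + v) - Φ (u - v) (u - v)‖ := by rw [hpol]
        _ ≤ _ := norm_sub_le _ _
    have hpar : ‖u + v‖ ^ 2 + ‖u - v‖ ^ 2 = 2 * (‖u‖ ^ 2 + ‖v‖ ^ 2) := by
      have := parallelogram_law_with_norm ℝ u v
      linarith [this]
    have h5 : ‖Φ (u + v) (u + v)‖ + ‖Φ (u - v) (u - v)‖ ≤ sSup B * 4 := by
      calc ‖Φ (u + v) (u + v)‖ + ‖Φ (u - v) (u - v)‖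
          ≤ sSup B * ‖u + v‖ ^ 2 + sSup B * ‖u - v‖ ^ 2 :=
            add_le_add (hkey _) (hkey _)
        _ = sSup B * (‖u + v‖ ^ 2 + ‖u - v‖ ^ 2) := by ring
        _ = sSup B * 4 := by rw [hpar, hu, hv]; ring
    linarith
  · have hAe : A = ∅ := by
      ext x; simp only [hA, Set.mem_setOf_eq, Set.mem_empty_iff_false, iff_false]
      rintro ⟨u, v, hu, hv, _⟩
      exact hne ⟨u, hu⟩
    have hBe : B = ∅ := by
      ext x; simp only [hB, Set.mem_setOf_eq, Set.mem_empty_iff_false, iff_false]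
      rintro ⟨u, hu, _⟩
      exact hne ⟨u, hu⟩
    rw [hAe, hBe]
end

section
/- Let f : ℝⁿ → ℝ be convex, α-smooth (0 ⪯ Hess f ⪯ α·I), with a minimizer x*. Then gradient descent with step size 1/α starting at x₀ satisfies f(x_t) − f(x*) ≤ 2α‖x₀ − x*‖²/(t+4). -/
set_option linter.unusedSectionVars false
set_option maxHeartbeats 1000000

open InnerProductSpace RealInnerProductSpace

section GDAux

variable {E : Type*} [NormedAddCommGroup E] [InnerProductSpace ℝ E] [CompleteSpace E]

lemma gd_inner_grad (f : E → ℝ) (x v : E) :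
    ⟪gradient f x, v⟫ = fderiv ℝ f x v := by
  rw [gradient, ← InnerProductSpace.toDual_apply_apply, LinearIsometryEquiv.apply_symm_apply]

lemma gd_lip (f : E → ℝ) (α : ℝ) (hf : ContDiff ℝ 2 f)
    (hhess : ∀ x, ‖fderiv ℝ (fderiv ℝ f) x‖ ≤ α) (x y : E) :
    ‖fderiv ℝ f y - fderiv ℝ f x‖ ≤ α * ‖y - x‖ := by
  have hd : Differentiable ℝ (fderiv ℝ f) :=
    (hf.fderiv_right (m := 1) (by norm_num)).differentiable (by norm_num)
  exact Convex.norm_image_sub_le_of_norm_fderiv_le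
    (fun z _ => hd z) (fun z _ => hhess z) convex_univ trivial trivial

lemma gd_line_deriv (f : E → ℝ) (hf : Differentiable ℝ f) (a v : E) (t : ℝ) :
    HasDerivAt (fun s : ℝ => f (a + s • v)) (fderiv ℝ f (a + t • v) v) t := by
  have h1 : HasDerivAt (fun s : ℝ => a + s • v) v t := by
    simpa using ((hasDerivAt_id t).smul_const v).const_add a
  exact ((hf (a + t • v)).hasFDerivAt.comp_hasDerivAt t h1)

lemma gd_smooth (f : E → ℝ) (α : ℝ) (hf : ContDiff ℝ 2 f)
    (hhess : ∀ x, ‖fderiv ℝ (fderiv ℝ f) x‖ ≤ α) (a v : E) :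
    f (a + v) ≤ f a + fderiv ℝ f a v + α / 2 * ‖v‖ ^ 2 := by
  have hdf : Differentiable ℝ f := hf.differentiable (by norm_num)
  set h : ℝ → ℝ := fun t => f (a + t • v) - t * fderiv ℝ f a v - α / 2 * ‖v‖ ^ 2 * t ^ 2 with hh
  have hder : ∀ t : ℝ,
      HasDerivAt h (fderiv ℝ f (a + t • v) v - fderiv ℝ f a v - α * ‖v‖ ^ 2 * t) t := by
    intro t
    have h1 := gd_line_deriv f hdf a v t
    have h2 : HasDerivAt (fun s : ℝ => s * fderiv ℝ f a v) (fderiv ℝ f a v) t := by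
      simpa using (hasDerivAt_id t).mul_const (fderiv ℝ f a v)
    have h3 : HasDerivAt (fun s : ℝ => α / 2 * ‖v‖ ^ 2 * s ^ 2) (α * ‖v‖ ^ 2 * t) t := by
      have := (hasDerivAt_pow 2 t).const_mul (α / 2 * ‖v‖ ^ 2)
      convert this using 1
      · rfl
      · rfl
      · norm_num
        ring
    exact (h1.sub h2).sub h3
  have hante : AntitoneOn h (Set.Icc (0:ℝ) 1) := by
    apply antitoneOn_of_deriv_nonpos (convex_Icc 0 1)
    · exact fun t _ => (hder t).continuousAt.continuousWithinAt
    · exact fun t _ => (hder t).differentiableAt.differentiableWithinAt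
    · intro t ht
      rw [interior_Icc] at ht
      rw [(hder t).deriv]
      have ht0 : 0 ≤ t := ht.1.le
      have hb : ‖fderiv ℝ f (a + t • v) - fderiv ℝ f a‖ ≤ α * (t * ‖v‖) := by
        have := gd_lip f α hf hhess a (a + t • v)
        simpa [norm_smul, abs_of_nonneg ht0] using this
      have hb2 : (fderiv ℝ f (a + t • v) - fderiv ℝ f a) v
          ≤ ‖fderiv ℝ f (a + t • v) - fderiv ℝ f a‖ * ‖v‖ := by
        calc (fderiv ℝ f (a + t • v) - fderiv ℝ f a) v
            ≤ ‖(fderiv ℝ f (a + t • v) - fderiv ℝ f a) v‖ := le_abs_self _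
          _ ≤ _ := (fderiv ℝ f (a + t • v) - fderiv ℝ f a).le_opNorm v
      have hb3 : fderiv ℝ f (a + t • v) v - fderiv ℝ f a v ≤ α * ‖v‖ ^ 2 * t := by
        have hexp : (fderiv ℝ f (a + t • v) - fderiv ℝ f a) v
            = fderiv ℝ f (a + t • v) v - fderiv ℝ f a v := by simp
        nlinarith [norm_nonneg v, norm_nonneg (fderiv ℝ f (a + t • v) - fderiv ℝ f a)]
      linarith
  have key := hante (Set.left_mem_Icc.2 zero_le_one) (Set.right_mem_Icc.2 zero_le_one) zero_le_one
  simp only [hh, zero_smul, add_zero, one_smul, zero_mul, mul_zero, mul_one, one_pow,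
    sub_zero, zero_pow] at key
  linarith [key]

lemma gd_convex_lb (f : E → ℝ) (hconv : ConvexOn ℝ Set.univ f) (hdf : Differentiable ℝ f)
    (a y : E) : f a + fderiv ℝ f a (y - a) ≤ f y := by
  set g : ℝ → ℝ := fun t => f (a + t • (y - a)) with hg
  have hgc : ConvexOn ℝ Set.univ g := by
    refine ⟨convex_univ, ?_⟩
    intro s _ u _ p q hp hq hpq
    have key : a + (p * s + q * u) • (y - a)
        = p • (a + s • (y - a)) + q • (a + u • (y - a)) := by
      have h1 : a = (p + q) • a := by rw [hpq, one_smul]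
      calc a + (p * s + q * u) • (y - a)
          = (p + q) • a + (p * s + q * u) • (y - a) := by rw [← h1]
        _ = p • (a + s • (y - a)) + q • (a + u • (y - a)) := by
            rw [add_smul, add_smul, smul_add, smul_add, smul_smul, smul_smul]; abel
    have := hconv.2 (Set.mem_univ (a + s • (y - a))) (Set.mem_univ (a + u • (y - a))) hp hq hpq
    simpa [hg, key] using this
  have hd0 : HasDerivAt g (fderiv ℝ f a (y - a)) 0 := by
    simpa using gd_line_deriv f hdf a (y - a) 0
  have := hgc.le_slope_of_hasDerivAt (Set.mem_univ 0) (Set.mem_univ 1) zero_lt_one hd0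
  rw [slope_def_field] at this
  simp only [hg, one_smul, zero_smul, add_zero] at this
  have h1 : a + (y - a) = y := by abel
  rw [h1] at this
  have h2 : fderiv ℝ f a (y - a) ≤ f y - f a := by
    field_simp at this
    simp only [sub_zero, mul_one] at this
    linarith
  linarith

lemma gd_rec {c a d d' : ℝ} (hc : 0 < c) (ha : 4 ≤ a) (hd0 : 0 ≤ d)
    (hdM : d * a ≤ c) (hrec : d' * c ≤ d * c - d ^ 2) : d' * (a + 1) ≤ c := by
  have ha0 : (0:ℝ) < a := by linarith
  have hfac : 0 ≤ c * a ^ 2 - d * a * (a + 1) := by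
    nlinarith [mul_le_mul_of_nonneg_right hdM (by linarith : (0:ℝ) ≤ a + 1),
      mul_nonneg hc.le (show (0:ℝ) ≤ a ^ 2 - a - 1 by nlinarith)]
  have hP : 0 ≤ c ^ 2 * a ^ 2 - d * c * a ^ 2 * (a + 1) + d ^ 2 * a ^ 2 * (a + 1) := by
    nlinarith [mul_nonneg (sub_nonneg.2 hdM) hfac, mul_nonneg (mul_nonneg hd0 ha0.le) hc.le]
  have hR : 0 ≤ c ^ 2 - d * c * (a + 1) + d ^ 2 * (a + 1) := by
    nlinarith [hP, pow_pos ha0 2]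
  nlinarith [hR, hc, mul_le_mul_of_nonneg_right hrec (by linarith : (0:ℝ) ≤ a + 1)]

end GDAux

/-- Convergence of gradient descent for convex `α`-smooth functions: with
step-size `1/α`, `f(x_t) − f(x*) ≤ 2α‖x₀ − x*‖² / (t + 4)`. -/
theorem gradient_descent_convex {n : ℕ}
    (f : EuclideanSpace ℝ (Fin n) → ℝ) (α : ℝ) (hα : 0 < α)
    (hf : ContDiff ℝ 2 f)
    (hconv : ConvexOn ℝ Set.univ f)
    (hhess : ∀ x, ‖fderiv ℝ (fderiv ℝ f) x‖ ≤ α)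
    (xstar : EuclideanSpace ℝ (Fin n)) (hmin : ∀ y, f xstar ≤ f y)
    (x : ℕ → EuclideanSpace ℝ (Fin n))
    (hstep : ∀ k, x (k + 1) = x k - (1 / α) • gradient f (x k))
    (t : ℕ) :
    f (x t) - f xstar ≤ 2 * α * ‖x 0 - xstar‖ ^ 2 / (t + 4) := by
  have hdf : Differentiable ℝ f := hf.differentiable (by norm_num)
  have hloc : IsLocalMin f xstar := Filter.Eventually.of_forall hmin
  have hgrad0 : gradient f xstar = 0 := by
    rw [gradient, hloc.fderiv_eq_zero, map_zero]
  -- sufficient decrease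
  have key1 : ∀ k, f (x (k + 1)) ≤ f (x k) - ‖gradient f (x k)‖ ^ 2 / (2 * α) := by
    intro k
    set g := gradient f (x k) with hgk
    have hv : x (k + 1) = x k + (-(1 / α)) • g := by
      rw [hstep k, neg_smul, ← sub_eq_add_neg]
    have hs := gd_smooth f α hf hhess (x k) ((-(1 / α)) • g)
    rw [← hv] at hs
    have hfd : fderiv ℝ f (x k) ((-(1 / α)) • g) = -(1 / α) * ‖g‖ ^ 2 := by
      rw [map_smul]
      have hg2 : fderiv ℝ f (x k) g = ‖g‖ ^ 2 := by
        rw [← gd_inner_grad, ← hgk, real_inner_self_eq_norm_sq]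
      rw [smul_eq_mul, hg2]
    rw [hfd] at hs
    have heq : -(1 / α) * ‖g‖ ^ 2 + α / 2 * ‖(-(1 / α)) • g‖ ^ 2 = -(‖g‖ ^ 2 / (2 * α)) := by
      rw [norm_smul, Real.norm_eq_abs, abs_neg, abs_of_pos (by positivity : (0:ℝ) < 1 / α)]
      field_simp
      ring
    nlinarith [hs, heq]
  -- first-order convexity bound
  have key2 : ∀ k, f (x k) - f xstar ≤ ⟪gradient f (x k), x k - xstar⟫_ℝ := by
    intro k
    have h1 := gd_convex_lb f hconv hdf (x k) xstar
    have h2 : fderiv ℝ f (x k) (xstar - x k) = -⟪gradient f (x k), x k - xstar⟫_ℝ := by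
      rw [show xstar - x k = -(x k - xstar) by abel, map_neg, ← gd_inner_grad]
    rw [h2] at h1
    linarith
  have key2' : ∀ k, f (x k) - f xstar ≤ ‖gradient f (x k)‖ * ‖x k - xstar‖ := by
    intro k
    exact (key2 k).trans (real_inner_le_norm _ _)
  -- distance is nonincreasing
  have key3 : ∀ k, ‖x (k + 1) - xstar‖ ≤ ‖x k - xstar‖ := by
    intro k
    set g := gradient f (x k) with hgk
    set w := x k - xstar with hw
    have hlb : ‖g‖ ^ 2 / (2 * α) ≤ ⟪g, w⟫_ℝ := by
      have h1 := key1 k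
      have h2 := key2 k
      have h3 := hmin (x (k + 1))
      linarith
    have hxw : x (k + 1) - xstar = w - (1 / α) • g := by
      rw [hstep k, hw]; abel
    have hsq : ‖w - (1 / α) • g‖ ^ 2
        = ‖w‖ ^ 2 - 2 * ((1 / α) * ⟪g, w⟫_ℝ) + (1 / α) ^ 2 * ‖g‖ ^ 2 := by
      rw [norm_sub_sq_real, real_inner_smul_right, norm_smul, Real.norm_eq_abs,
        abs_of_pos (by positivity : (0:ℝ) < 1 / α), real_inner_comm]
      ring
    have hml := mul_le_mul_of_nonneg_right hlb (by positivity : (0:ℝ) ≤ 2 * (1 / α))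
    have he : ‖g‖ ^ 2 / (2 * α) * (2 * (1 / α)) = (1 / α) ^ 2 * ‖g‖ ^ 2 := by
      field_simp
    rw [he] at hml
    have hsqle : ‖x (k + 1) - xstar‖ ^ 2 ≤ ‖w‖ ^ 2 := by
      rw [hxw, hsq]
      nlinarith [hml]
    nlinarith [hsqle, norm_nonneg (x (k + 1) - xstar), norm_nonneg w]
  have hdist : ∀ k, ‖x k - xstar‖ ≤ ‖x 0 - xstar‖ := by
    intro k
    induction k with
    | zero => exact le_rfl
    | succ k ih => exact (key3 k).trans ih
  set D := ‖x 0 - xstar‖ with hD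
  rcases eq_or_lt_of_le (norm_nonneg (x 0 - xstar)) with hD0 | hD0
  · -- degenerate case: x₀ = x*
    have hx0 : x 0 = xstar := by
      rw [← sub_eq_zero]
      exact norm_eq_zero.mp hD0.symm
    have hall : ∀ k, x k = xstar := by
      intro k
      induction k with
      | zero => exact hx0
      | succ k ih => rw [hstep k, ih, hgrad0, smul_zero, sub_zero]
    rw [hall t, sub_self]
    have : D = 0 := hD0.symm
    rw [hD, ← this, this]
    positivity
  · -- main case: D > 0
    have hc : (0:ℝ) < 2 * α * D ^ 2 := by positivity
    have claim : ∀ k : ℕ, f (x k) - f xstar ≤ 2 * α * D ^ 2 / ((k : ℝ) + 4) := by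
      intro k
      induction k with
      | zero =>
        have hs := gd_smooth f α hf hhess xstar (x 0 - xstar)
        rw [show xstar + (x 0 - xstar) = x 0 by abel, hloc.fderiv_eq_zero] at hs
        simp only [ContinuousLinearMap.zero_apply, add_zero] at hs
        rw [← hD] at hs
        push_cast
        rw [le_div_iff₀ (by norm_num : (0:ℝ) < 0 + 4)]
        nlinarith [hs]
      | succ k ih =>
        have hk4 : (0:ℝ) < (k : ℝ) + 4 := by positivity
        have hd0 : 0 ≤ f (x k) - f xstar := sub_nonneg.2 (hmin (x k))
        have hdM : (f (x k) - f xstar) * ((k : ℝ) + 4) ≤ 2 * α * D ^ 2 := by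
          rw [← le_div_iff₀ hk4]
          exact ih
        have hrec : (f (x (k + 1)) - f xstar) * (2 * α * D ^ 2)
            ≤ (f (x k) - f xstar) * (2 * α * D ^ 2) - (f (x k) - f xstar) ^ 2 := by
          set g := gradient f (x k) with hgk
          have h1 : f (x k) - f xstar ≤ ‖g‖ * D := by
            calc f (x k) - f xstar ≤ ‖g‖ * ‖x k - xstar‖ := key2' k
              _ ≤ ‖g‖ * D := by
                  exact mul_le_mul_of_nonneg_left (hdist k) (norm_nonneg g)
          have h2 : (f (x k) - f xstar) ^ 2 ≤ ‖g‖ ^ 2 * D ^ 2 := by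
            nlinarith [hd0, norm_nonneg g, hD0.le]
          have h3 : ‖g‖ ^ 2 / (2 * α) * (2 * α) * D ^ 2 = ‖g‖ ^ 2 * D ^ 2 := by
            rw [div_mul_cancel₀ _ (by positivity : (2 : ℝ) * α ≠ 0)]
          have h4 := mul_le_mul_of_nonneg_right (key1 k)
            (by positivity : (0:ℝ) ≤ 2 * α * D ^ 2)
          nlinarith [h4, h3, h2]
        have := gd_rec hc (by linarith : (4:ℝ) ≤ (k : ℝ) + 4) hd0 hdM hrec
        push_cast
        rw [le_div_iff₀ (by positivity : (0:ℝ) < (k:ℝ) + 1 + 4)]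
        linarith
    have := claim t
    exact this
end
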